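/- arXiv:1507.01017 — 5 statements merged into one kernel-verified Lean document; each statement's English description precedes it below -/
import Mathlib

section
/- For t > 0, the sum Σ_{n=0}^∞ ∫_{−t}^{t} [ (t+y)^n (t−y)^n / (n!)^2 + 2t (t+y)^n (t−y)^n / ((n+1)! n!) ] · 2^{1−2n} dy equals 10 e^t + 6 e^{−t} − 16. -/
open intervalIntegral

lemma beta_nat : ∀ (b a : ℕ), (∫ x in (0:ℝ)..1, x ^ a * (1 - x) ^ b)
    = (a.factorial : ℝ) * b.factorial / (a + b + 1).factorial := by
  intro b
  induction b with
  | zero =>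
    intro a
    simp only [pow_zero, mul_one, Nat.add_zero, Nat.factorial, Nat.cast_one, mul_one,
      integral_pow, one_pow]
    push_cast
    rw [zero_pow (by omega)]
    have : ((a:ℝ)+1) ≠ 0 := by positivity
    field_simp
    norm_num
  | succ b ih =>
    intro a
    have ha : ((a:ℝ) + 1) ≠ 0 := by positivity
    have key := integral_mul_deriv_eq_deriv_mul
      (u := fun x : ℝ => (1 - x) ^ (b + 1))
      (u' := fun x : ℝ => ((b:ℝ) + 1) * (1 - x) ^ b * (-1))
      (v := fun x : ℝ => x ^ (a + 1) / ((a:ℝ) + 1))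
      (v' := fun x : ℝ => x ^ a)
      (a := (0:ℝ)) (b := 1)
      (fun x _ => by
        have h := ((hasDerivAt_id x).const_sub 1).fun_pow (b + 1)
        simpa [Nat.add_sub_cancel, mul_comm] using h)
      (fun x _ => by
        have h := (hasDerivAt_pow (a + 1) x).div_const ((a:ℝ) + 1)
        have : ((a:ℝ) + 1) * x ^ a / ((a:ℝ) + 1) = x ^ a := by field_simp
        simpa [Nat.add_sub_cancel, this] using h)
      (Continuous.intervalIntegrable (by continuity) _ _)
      (Continuous.intervalIntegrable (by continuity) _ _)
    have comm : (∫ x in (0:ℝ)..1, x ^ a * (1 - x) ^ (b + 1))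
        = ∫ x in (0:ℝ)..1, (1 - x) ^ (b + 1) * x ^ a := by
      simp_rw [mul_comm]
    rw [comm, key]
    have lhs2 : (∫ x in (0:ℝ)..1, ((b:ℝ) + 1) * (1 - x) ^ b * (-1) * (x ^ (a + 1) / ((a:ℝ) + 1)))
        = (-(((b:ℝ) + 1) / ((a:ℝ) + 1))) * ∫ x in (0:ℝ)..1, x ^ (a + 1) * (1 - x) ^ b := by
      rw [← integral_const_mul]
      congr 1
      ext x
      ring
    rw [lhs2, ih (a + 1)]
    have he : a + (b + 1) + 1 = a + 1 + b + 1 := by omega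
    rw [he]
    have hA : ((a+1).factorial : ℝ) = ((a:ℝ)+1) * a.factorial := by
      rw [Nat.factorial_succ]; push_cast; ring
    have hB : ((b+1).factorial : ℝ) = ((b:ℝ)+1) * b.factorial := by
      rw [Nat.factorial_succ]; push_cast; ring
    have hD : ((a + 1 + b + 1).factorial : ℝ) ≠ 0 := by positivity
    rw [hA, hB]
    field_simp
    ring

lemma Jn (t : ℝ) (ht : 0 < t) (n : ℕ) :
    (∫ y in (-t)..t, (t + y) ^ n * (t - y) ^ n)
      = (2 * t) ^ (2 * n + 1) * ((n.factorial : ℝ)) ^ 2 / ((2 * n + 1).factorial : ℝ) := by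
  have h := intervalIntegral.smul_integral_comp_mul_add
    (f := fun y : ℝ => (t + y) ^ n * (t - y) ^ n) (a := (0:ℝ)) (b := 1) (2 * t) (-t)
  have he0 : 2 * t * 0 + -t = -t := by ring
  have he1 : 2 * t * 1 + -t = t := by ring
  rw [he0, he1] at h
  rw [← h]
  have hint : (∫ x in (0:ℝ)..1, (t + (2 * t * x + -t)) ^ n * (t - (2 * t * x + -t)) ^ n)
      = (2 * t) ^ (2 * n) * ∫ x in (0:ℝ)..1, x ^ n * (1 - x) ^ n := by
    rw [← integral_const_mul]
    congr 1
    ext x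
    have e1 : t + (2 * t * x + -t) = 2 * t * x := by ring
    have e2 : t - (2 * t * x + -t) = 2 * t * (1 - x) := by ring
    rw [e1, e2, mul_pow (2*t) x, mul_pow (2*t) (1-x), mul_pow 2 t]
    ring
  rw [hint, beta_nat n n]
  have : n + n + 1 = 2 * n + 1 := by ring
  rw [this]
  rw [smul_eq_mul]
  ring

lemma term_eq (t : ℝ) (ht : 0 < t) (n : ℕ) :
    (∫ y in (-t)..t,
        ((t + y) ^ n * (t - y) ^ n / ((n.factorial : ℝ)) ^ 2 +
          2 * t * ((t + y) ^ n * (t - y) ^ n) /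
            (((n + 1).factorial : ℝ) * (n.factorial : ℝ))) *
          (2 : ℝ) ^ (1 - 2 * (n : ℤ)))
      = 4 * t ^ (2 * n + 1) / ((2 * n + 1).factorial : ℝ)
        + 16 * t ^ (2 * n + 2) / ((2 * n + 2).factorial : ℝ) := by
  have hzp : (2 : ℝ) ^ (1 - 2 * (n : ℤ)) = 2 / 2 ^ (2 * n) := by
    rw [show (1 - 2 * (n : ℤ)) = 1 - ((2 * n : ℕ) : ℤ) by push_cast; ring,
      zpow_sub₀ (two_ne_zero), zpow_one, zpow_natCast]
  have hconst : ∀ y : ℝ,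
      ((t + y) ^ n * (t - y) ^ n / ((n.factorial : ℝ)) ^ 2 +
          2 * t * ((t + y) ^ n * (t - y) ^ n) /
            (((n + 1).factorial : ℝ) * (n.factorial : ℝ))) *
          (2 : ℝ) ^ (1 - 2 * (n : ℤ))
      = ((t + y) ^ n * (t - y) ^ n) *
        ((1 / ((n.factorial : ℝ)) ^ 2 +
          2 * t / (((n + 1).factorial : ℝ) * (n.factorial : ℝ))) *
          (2 : ℝ) ^ (1 - 2 * (n : ℤ))) := by
    intro y; ring
  simp_rw [hconst]
  rw [integral_mul_const, Jn t ht n, hzp]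
  have hf1 : ((n.factorial : ℝ)) ≠ 0 := by positivity
  have hf2 : (((n+1).factorial : ℝ)) ≠ 0 := by positivity
  have hf3 : (((2*n+1).factorial : ℝ)) ≠ 0 := by positivity
  have hf4 : (((2*n+2).factorial : ℝ)) ≠ 0 := by positivity
  have hp2 : ((2:ℝ)) ^ (2*n) ≠ 0 := by positivity
  have hA : (((n+1).factorial : ℝ)) = ((n:ℝ)+1) * n.factorial := by
    rw [Nat.factorial_succ]; push_cast; ring
  have hB : (((2*n+2).factorial : ℝ)) = (2*(n:ℝ)+2) * (2*n+1).factorial := by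
    rw [show 2*n+2 = (2*n+1)+1 by ring, Nat.factorial_succ]; push_cast; ring
  have hpow : (2*t) ^ (2*n+1) = 2^(2*n+1) * t^(2*n+1) := by rw [mul_pow]
  rw [hpow, hA, hB]
  have hn1 : ((n:ℝ)+1) ≠ 0 := by positivity
  field_simp
  ring

noncomputable def fk (t : ℝ) (k : ℕ) : ℝ := (10 + 6 * (-1 : ℝ) ^ k) * t ^ k / k.factorial

lemma fk_summable (t : ℝ) : Summable (fk t) := by
  have h1 : Summable (fun k : ℕ => 10 * (t ^ k / k.factorial)) :=
    (Real.summable_pow_div_factorial t).mul_left 10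
  have h2 : Summable (fun k : ℕ => 6 * ((-t) ^ k / k.factorial)) :=
    (Real.summable_pow_div_factorial (-t)).mul_left 6
  have := h1.add h2
  refine this.congr fun k => ?_
  unfold fk
  rw [neg_pow]
  ring

lemma fk_tsum (t : ℝ) : ∑' k, fk t k = 10 * Real.exp t + 6 * Real.exp (-t) := by
  have h1 : Summable (fun k : ℕ => 10 * (t ^ k / k.factorial)) :=
    (Real.summable_pow_div_factorial t).mul_left 10
  have h2 : Summable (fun k : ℕ => 6 * ((-t) ^ k / k.factorial)) :=
    (Real.summable_pow_div_factorial (-t)).mul_left 6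
  have hcong : ∀ k : ℕ, fk t k = 10 * (t ^ k / k.factorial) + 6 * ((-t) ^ k / k.factorial) := by
    intro k; unfold fk; rw [neg_pow]; ring
  calc ∑' k, fk t k = ∑' k, (10 * (t ^ k / k.factorial) + 6 * ((-t) ^ k / k.factorial)) := by
        exact tsum_congr hcong
    _ = (∑' k, 10 * ((t ^ k / k.factorial) : ℝ)) + ∑' k, 6 * ((-t) ^ k / k.factorial) :=
        Summable.tsum_add h1 h2
    _ = 10 * Real.exp t + 6 * Real.exp (-t) := by
        rw [tsum_mul_left, tsum_mul_left]
        congr 1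
        · congr 1
          rw [Real.exp_eq_exp_ℝ, NormedSpace.exp_eq_tsum_div]
        · congr 1
          rw [Real.exp_eq_exp_ℝ, NormedSpace.exp_eq_tsum_div]

/-- The total wave of influences for `(ℝ, d/dx, -d/dx)`:
`Σₙ ∫_{-t}^{t} [ (t+y)ⁿ(t-y)ⁿ/(n!)² + 2t(t+y)ⁿ(t-y)ⁿ/((n+1)!n!) ]·2^{1-2n} dy
  = 10eᵗ + 6e⁻ᵗ - 16`. -/
theorem stmt5 (t : ℝ) (ht : 0 < t) :
    ∑' n : ℕ,
      (∫ y in (-t)..t,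
        ((t + y) ^ n * (t - y) ^ n / ((n.factorial : ℝ)) ^ 2 +
          2 * t * ((t + y) ^ n * (t - y) ^ n) /
            (((n + 1).factorial : ℝ) * (n.factorial : ℝ))) *
          (2 : ℝ) ^ (1 - 2 * (n : ℤ)))
      = 10 * Real.exp t + 6 * Real.exp (-t) - 16 := by
  have hterm : ∀ n : ℕ,
      (∫ y in (-t)..t,
        ((t + y) ^ n * (t - y) ^ n / ((n.factorial : ℝ)) ^ 2 +
          2 * t * ((t + y) ^ n * (t - y) ^ n) /
            (((n + 1).factorial : ℝ) * (n.factorial : ℝ))) *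
          (2 : ℝ) ^ (1 - 2 * (n : ℤ)))
      = fk t (2 * n + 1) + fk t (2 * n + 2) := by
    intro n
    rw [term_eq t ht n]
    unfold fk
    have ho : (-1 : ℝ) ^ (2 * n + 1) = -1 := Odd.neg_one_pow ⟨n, by ring⟩
    have hev : (-1 : ℝ) ^ (2 * n + 2) = 1 := Even.neg_one_pow ⟨n + 1, by ring⟩
    rw [ho, hev]
    norm_num
  rw [tsum_congr hterm]
  have hs := fk_summable t
  have hodd : Summable (fun n : ℕ => fk t (2 * n + 1)) :=
    hs.comp_injective fun a b h => by omega
  have heven : Summable (fun n : ℕ => fk t (2 * n)) :=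
    hs.comp_injective fun a b h => by omega
  have hshift : Summable (fun n : ℕ => fk t (2 * n + 2)) :=
    hs.comp_injective fun a b h => by omega
  rw [Summable.tsum_add hodd hshift]
  have h2 : (∑' n : ℕ, fk t (2 * n + 2)) = (∑' n : ℕ, fk t (2 * n)) - fk t 0 := by
    have hg : Summable (fun n : ℕ => fk t (2 * n)) := heven
    have := Summable.tsum_eq_zero_add hg
    have hre : ∀ n : ℕ, fk t (2 * (n + 1)) = fk t (2 * n + 2) := fun n => by rw [show 2*(n+1) = 2*n+2 from by ring]
    rw [tsum_congr hre] at this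
    linarith [this]
  rw [h2]
  have hsum : (∑' n : ℕ, fk t (2 * n)) + ∑' n : ℕ, fk t (2 * n + 1) = ∑' k, fk t k :=
    tsum_even_add_odd heven hodd
  have hf0 : fk t 0 = 16 := by unfold fk; norm_num
  rw [hf0]
  rw [fk_tsum t] at hsum
  linarith [hsum]
end

section
/- For t > 0, ∫_0^t Σ_{n=0}^∞ ( 2 s^n (t−s)^n / (n!)² + s^{n+1}(t−s)^n / ((n+1)! n!) + s^n (t−s)^{n+1} / (n! (n+1)!) ) ds = 2(e^t − 1). -/
open intervalIntegral MeasureTheory Set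

private lemma keyJ (b : ℕ) : ∀ (a : ℕ) (t : ℝ),
    ∫ s in (0:ℝ)..t, s ^ a * (t - s) ^ b
      = (a.factorial : ℝ) * b.factorial * t ^ (a + b + 1) / (a + b + 1).factorial := by
  induction b with
  | zero =>
    intro a t
    simp only [pow_zero, mul_one, integral_pow, Nat.factorial_zero, Nat.cast_one, Nat.add_zero]
    rw [Nat.factorial_succ]
    have h : ((a:ℝ)+1) ≠ 0 := by positivity
    have h2 : (a.factorial : ℝ) ≠ 0 := Nat.cast_ne_zero.mpr a.factorial_ne_zero
    push_cast
    field_simp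
    ring
  | succ b ih =>
    intro a t
    have hu : ∀ x ∈ uIcc (0:ℝ) t,
        HasDerivAt (fun s : ℝ => (t - s) ^ (b+1)) (-((b:ℝ)+1) * (t - x) ^ b) x := by
      intro x _
      have h1 : HasDerivAt (fun s : ℝ => t - s) (-1) x := (hasDerivAt_id x).const_sub t
      have : HasDerivAt (fun s : ℝ => (t - s) ^ (b+1)) (↑(b + 1) * (t - x) ^ (b + 1 - 1) * -1) x := h1.pow (b+1)
      convert this using 1
      push_cast
      ring_nf
    have hv : ∀ x ∈ uIcc (0:ℝ) t,
        HasDerivAt (fun s : ℝ => s ^ (a+1) / ((a:ℝ)+1)) (x ^ a) x := by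
      intro x _
      have h : ((a:ℝ)+1) ≠ 0 := by positivity
      have : HasDerivAt (fun s : ℝ => s ^ (a+1) / ((a:ℝ)+1)) (↑(a + 1) * x ^ (a + 1 - 1) / (↑a + 1)) x := (hasDerivAt_pow (a+1) x).div_const ((a:ℝ)+1)
      convert this using 1
      push_cast
      field_simp
    have hu' : IntervalIntegrable (fun x : ℝ => -((b:ℝ)+1) * (t - x) ^ b) volume 0 t :=
      (continuous_const.mul ((continuous_const.sub continuous_id).pow b)).intervalIntegrable 0 t
    have hv' : IntervalIntegrable (fun x : ℝ => x ^ a) volume 0 t :=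
      (continuous_pow a).intervalIntegrable 0 t
    have key := intervalIntegral.integral_mul_deriv_eq_deriv_mul hu hv hu' hv'
    have lhs_eq : (∫ x in (0:ℝ)..t, (t - x) ^ (b+1) * x ^ a)
        = ∫ x in (0:ℝ)..t, x ^ a * (t - x) ^ (b+1) := by
      congr 1; funext x; ring
    have rhs_eq : (∫ x in (0:ℝ)..t, -((b:ℝ)+1) * (t - x) ^ b * (x ^ (a+1) / ((a:ℝ)+1)))
        = (-((b:ℝ)+1) / ((a:ℝ)+1)) * ∫ x in (0:ℝ)..t, x ^ (a+1) * (t - x) ^ b := by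
      rw [← intervalIntegral.integral_const_mul]
      congr 1; funext x; ring
    rw [lhs_eq, rhs_eq, ih (a+1) t] at key
    rw [key]
    have h : ((a:ℝ)+1) ≠ 0 := by positivity
    have hfac : ∀ m : ℕ, ((m.factorial : ℝ)) ≠ 0 := fun m => Nat.cast_ne_zero.mpr m.factorial_ne_zero
    have e2 : a + 1 + b + 1 = a + (b+1) + 1 := by omega
    rw [e2, Nat.factorial_succ a, Nat.factorial_succ b]
    push_cast
    field_simp
    ring

private lemma intF (t : ℝ) (n : ℕ) :
    ∫ s in (0:ℝ)..t,
      (2 * s ^ n * (t - s) ^ n / ((n.factorial : ℝ)) ^ 2 +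
        s ^ (n + 1) * (t - s) ^ n / (((n + 1).factorial : ℝ) * (n.factorial : ℝ)) +
        s ^ n * (t - s) ^ (n + 1) / ((n.factorial : ℝ) * ((n + 1).factorial : ℝ)))
      = 2 * (t ^ (2*n+1) / (2*n+1).factorial + t ^ (2*n+2) / (2*n+2).factorial) := by
  have hfac : ∀ m : ℕ, ((m.factorial : ℝ)) ≠ 0 := fun m => Nat.cast_ne_zero.mpr m.factorial_ne_zero
  have hi : ∀ a b : ℕ, IntervalIntegrable (fun s : ℝ => s ^ a * (t - s) ^ b) volume 0 t :=
    fun a b => ((continuous_pow a).mul ((continuous_const.sub continuous_id).pow b)).intervalIntegrable 0 t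
  have hrw : (fun s : ℝ =>
      2 * s ^ n * (t - s) ^ n / ((n.factorial : ℝ)) ^ 2 +
        s ^ (n + 1) * (t - s) ^ n / (((n + 1).factorial : ℝ) * (n.factorial : ℝ)) +
        s ^ n * (t - s) ^ (n + 1) / ((n.factorial : ℝ) * ((n + 1).factorial : ℝ)))
      = fun s : ℝ =>
        (2 / ((n.factorial : ℝ)) ^ 2) * (s ^ n * (t - s) ^ n) +
        ((1 : ℝ) / (((n + 1).factorial : ℝ) * (n.factorial : ℝ))) * (s ^ (n+1) * (t - s) ^ n) +
        ((1 : ℝ) / ((n.factorial : ℝ) * ((n + 1).factorial : ℝ))) * (s ^ n * (t - s) ^ (n+1)) := by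
    funext s; ring
  rw [hrw]
  rw [intervalIntegral.integral_add (((hi n n).const_mul _).add ((hi (n+1) n).const_mul _))
      ((hi n (n+1)).const_mul _),
    intervalIntegral.integral_add ((hi n n).const_mul _) ((hi (n+1) n).const_mul _),
    intervalIntegral.integral_const_mul, intervalIntegral.integral_const_mul,
    intervalIntegral.integral_const_mul, keyJ, keyJ, keyJ]
  have e1 : n + n + 1 = 2*n+1 := by omega
  have e2 : n + 1 + n + 1 = 2*n+2 := by omega
  have e3 : n + (n + 1) + 1 = 2*n+2 := by omega
  rw [e1, e2, e3]
  field_simp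
  ring

private lemma sumEval (t : ℝ) :
    ∑' n : ℕ, (2 * (t ^ (2*n+1) / (2*n+1).factorial + t ^ (2*n+2) / (2*n+2).factorial))
      = 2 * (Real.exp t - 1) := by
  have hg : Summable (fun k : ℕ => t ^ k / k.factorial) := Real.summable_pow_div_factorial t
  have h1 : Summable (fun n : ℕ => t ^ (2*n+1) / (2*n+1).factorial) := by
    have := hg.comp_injective (i := fun n : ℕ => 2*n+1) (fun m n h => by dsimp only at h; omega)
    exact this
  have h2 : Summable (fun n : ℕ => t ^ (2*n+2) / (2*n+2).factorial) := by
    have := hg.comp_injective (i := fun n : ℕ => 2*n+2) (fun m n h => by dsimp only at h; omega)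
    exact this
  rw [tsum_mul_left, Summable.tsum_add h1 h2]
  congr 1
  have key : (∑' n : ℕ, t ^ (2*n+1) / (2*n+1).factorial)
      + ∑' n : ℕ, t ^ (2*n+2) / (2*n+2).factorial
      = ∑' k : ℕ, t ^ (k+1) / (k+1).factorial := by
    have he : Summable (fun n : ℕ => t ^ (2*n+1) / ((2*n+1).factorial : ℝ)) := h1
    have := tsum_even_add_odd (f := fun k : ℕ => t ^ (k+1) / ((k+1).factorial : ℝ))
      (by simpa using h1) (by
        have : (fun n : ℕ => t ^ (2*n+1+1) / ((2*n+1+1).factorial : ℝ))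
            = fun n : ℕ => t ^ (2*n+2) / ((2*n+2).factorial : ℝ) := by
          funext n; norm_num [add_assoc]
        simpa [this] using h2)
    simpa using this
  rw [key]
  have hz := Summable.tsum_eq_zero_add hg
  have hexp : Real.exp t = ∑' k : ℕ, t ^ k / k.factorial := by
    rw [Real.exp_eq_exp_ℝ, NormedSpace.exp_eq_tsum_div]
  rw [hexp, hz]
  norm_num

/-- The wave of influences for `(ℝ², ∂/∂x, ∂/∂y)`:
`∫₀ᵗ vol(Γ(s,t-s)) ds = 2(eᵗ - 1)`. -/
theorem stmt10 (t : ℝ) (ht : 0 < t) :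
    (∫ s in (0:ℝ)..t, ∑' n : ℕ,
      (2 * s ^ n * (t - s) ^ n / ((n.factorial : ℝ)) ^ 2 +
        s ^ (n + 1) * (t - s) ^ n / (((n + 1).factorial : ℝ) * (n.factorial : ℝ)) +
        s ^ n * (t - s) ^ (n + 1) / ((n.factorial : ℝ) * ((n + 1).factorial : ℝ))))
      = 2 * (Real.exp t - 1) := by
  set F : ℕ → ℝ → ℝ := fun n s =>
    2 * s ^ n * (t - s) ^ n / ((n.factorial : ℝ)) ^ 2 +
      s ^ (n + 1) * (t - s) ^ n / (((n + 1).factorial : ℝ) * (n.factorial : ℝ)) +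
      s ^ n * (t - s) ^ (n + 1) / ((n.factorial : ℝ) * ((n + 1).factorial : ℝ)) with hF
  have hcont : ∀ n, Continuous (F n) := by
    intro n
    apply Continuous.add
    apply Continuous.add
    · exact ((continuous_const.mul (continuous_pow n)).mul
        ((continuous_const.sub continuous_id).pow n)).div_const _
    · exact ((continuous_pow (n+1)).mul
        ((continuous_const.sub continuous_id).pow n)).div_const _
    · exact ((continuous_pow n).mul
        ((continuous_const.sub continuous_id).pow (n+1))).div_const _
  have hInt : ∀ n, IntegrableOn (F n) (Ioc 0 t) volume := fun n =>
    ((hcont n).intervalIntegrable 0 t).1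
  have hval : ∀ n, ∫ s in Ioc (0:ℝ) t, F n s
      = 2 * (t ^ (2*n+1) / (2*n+1).factorial + t ^ (2*n+2) / (2*n+2).factorial) := by
    intro n
    rw [← intervalIntegral.integral_of_le ht.le]
    exact intF t n
  have hnorm : ∀ n, (∫ s in Ioc (0:ℝ) t, ‖F n s‖) = ∫ s in Ioc (0:ℝ) t, F n s := by
    intro n
    refine setIntegral_congr_fun measurableSet_Ioc fun s hs => ?_
    have h1 : 0 ≤ s := hs.1.le
    have h2 : 0 ≤ t - s := sub_nonneg.mpr hs.2
    have hfac : ∀ m : ℕ, (0:ℝ) < m.factorial := fun m => by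
      exact_mod_cast m.factorial_pos
    apply Real.norm_of_nonneg
    have := hfac n
    have := hfac (n+1)
    positivity
  have hsum : Summable (fun n : ℕ => ∫ s in Ioc (0:ℝ) t, ‖F n s‖) := by
    simp only [hnorm, hval]
    have hg : Summable (fun k : ℕ => t ^ k / k.factorial) := Real.summable_pow_div_factorial t
    have h1 : Summable (fun n : ℕ => t ^ (2*n+1) / (2*n+1).factorial) := by
      have := hg.comp_injective (i := fun n : ℕ => 2*n+1) (fun m n h => by dsimp only at h; omega)
      exact this
    have h2 : Summable (fun n : ℕ => t ^ (2*n+2) / (2*n+2).factorial) := by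
      have := hg.comp_injective (i := fun n : ℕ => 2*n+2) (fun m n h => by dsimp only at h; omega)
      exact this
    exact (h1.add h2).mul_left 2
  rw [intervalIntegral.integral_of_le ht.le]
  rw [← MeasureTheory.integral_tsum_of_summable_integral_norm hInt hsum]
  simp only [hval]
  exact sumEval t
end

section
/- For 1 ≤ k < m, the number of sparse subsets of {1,...,m} of cardinality k equals p(m−k, k−1) + 2·p(m−k, k) + p(m−k, k+1), where p(a,b) denotes the number of compositions (ordered partitions) of a into exactly b positive parts. -/
/-- `pComp a b` is the number of compositions (ordered partitions) of `a` into exactly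
`b` positive parts. -/
noncomputable def pComp (a b : ℕ) : ℕ :=
  Nat.card {l : List ℕ // l.sum = a ∧ l.length = b ∧ ∀ x ∈ l, 0 < x}

lemma pComp_finite (a b : ℕ) :
    Finite {l : List ℕ // l.sum = a ∧ l.length = b ∧ ∀ x ∈ l, 0 < x} := by
  have hfin : ({l : List ℕ | l.sum = a ∧ l.length = b ∧ ∀ x ∈ l, 0 < x}).Finite := by
    have h1 : ({l : List (Fin (a+1)) | l.length = b}).Finite := List.finite_length_eq _ b
    have h2 : ((List.map (Fin.val) '' {l : List (Fin (a+1)) | l.length = b})).Finite :=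
      h1.image _
    refine h2.subset ?_
    rintro l ⟨hsum, hlen, hpos⟩
    refine ⟨l.map (fun x => ⟨min x a, by omega⟩), by simpa using hlen, ?_⟩
    rw [List.map_map]
    have : ∀ x ∈ l, (Fin.val ∘ fun x => (⟨min x a, by omega⟩ : Fin (a+1))) x = id x := by
      intro x hx
      have : x ≤ l.sum := List.single_le_sum (fun y _ => Nat.zero_le y) x hx
      simp [hsum ▸ this]
    rw [List.map_congr_left this, List.map_id]
  exact hfin.to_subtype

lemma pComp_zero_zero : pComp 0 0 = 1 := by
  rw [pComp, Nat.card_eq_one_iff_unique]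
  refine ⟨⟨?_⟩, ⟨⟨[], by simp⟩⟩⟩
  rintro ⟨l, hs, hl, hp⟩ ⟨l', hs', hl', hp'⟩
  simp only [Subtype.mk.injEq]
  rw [List.length_eq_zero_iff.mp hl, List.length_eq_zero_iff.mp hl']

lemma pComp_succ_zero (a : ℕ) : pComp (a+1) 0 = 0 := by
  rw [pComp, Nat.card_eq_zero]
  left
  constructor
  rintro ⟨l, hs, hl, hp⟩
  rw [List.length_eq_zero_iff.mp hl] at hs
  simp at hs

lemma pComp_zero_succ (b : ℕ) : pComp 0 (b+1) = 0 := by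
  rw [pComp, Nat.card_eq_zero]
  left
  constructor
  rintro ⟨l, hs, hl, hp⟩
  match l, hl with
  | x :: t, _ =>
    have hx : 0 < x := hp x (by simp)
    simp only [List.sum_cons] at hs
    omega

lemma pComp_succ_succ (a b : ℕ) : pComp (a+1) (b+1) = pComp a b + pComp a (b+1) := by
  have := pComp_finite a b
  have := pComp_finite a (b+1)
  classical
  let g : {l : List ℕ // l.sum = a ∧ l.length = b ∧ ∀ x ∈ l, 0 < x} ⊕
      {l : List ℕ // l.sum = a ∧ l.length = b + 1 ∧ ∀ x ∈ l, 0 < x} →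
      {l : List ℕ // l.sum = a + 1 ∧ l.length = b + 1 ∧ ∀ x ∈ l, 0 < x} := fun s =>
    match s with
    | Sum.inl ⟨t, ht⟩ => ⟨1 :: t, by
        refine ⟨by simp only [List.sum_cons, ht.1]; omega, by simp [ht.2.1], ?_⟩
        intro y hy
        rcases List.mem_cons.mp hy with rfl | hy
        · exact one_pos
        · exact ht.2.2 y hy⟩
    | Sum.inr ⟨[], h⟩ => absurd h.2.1 (by simp)
    | Sum.inr ⟨x :: t, h⟩ => ⟨(x+1) :: t, by
        refine ⟨?_, ?_, ?_⟩
        · have := h.1; simp only [List.sum_cons] at this ⊢; omega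
        · have := h.2.1; simpa using this
        · intro y hy
          rcases List.mem_cons.mp hy with rfl | hy
          · omega
          · exact h.2.2 y (List.mem_cons_of_mem _ hy)⟩
  have hbij : Function.Bijective g := by
    constructor
    · rintro (⟨t, ht⟩ | ⟨(_ | ⟨x, t⟩), h⟩) (⟨t', ht'⟩ | ⟨(_ | ⟨x', t'⟩), h'⟩) heq
      · simp only [g, Subtype.mk.injEq, List.cons.injEq] at heq
        simp [heq.2]
      · exact absurd h'.2.1 (by simp)
      · simp only [g, Subtype.mk.injEq, List.cons.injEq] at heq
        have := h'.2.2 x' List.mem_cons_self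
        omega
      · exact absurd h.2.1 (by simp)
      · exact absurd h.2.1 (by simp)
      · exact absurd h.2.1 (by simp)
      · simp only [g, Subtype.mk.injEq, List.cons.injEq] at heq
        have := h.2.2 x List.mem_cons_self
        omega
      · exact absurd h'.2.1 (by simp)
      · simp only [g, Subtype.mk.injEq, List.cons.injEq] at heq
        simp only [Sum.inr.injEq, Subtype.mk.injEq, List.cons.injEq]
        exact ⟨by omega, heq.2⟩
    · rintro ⟨(_ | ⟨x, t⟩), h⟩
      · exact absurd h.2.1 (by simp)
      · have hx : 0 < x := h.2.2 x List.mem_cons_self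
        have hsum : x + t.sum = a + 1 := by simpa using h.1
        have hlen : t.length = b := by simpa using h.2.1
        have hpos : ∀ y ∈ t, 0 < y := fun y hy => h.2.2 y (List.mem_cons_of_mem _ hy)
        rcases Nat.eq_or_lt_of_le hx with h1 | h1
        · exact ⟨Sum.inl ⟨t, by omega, hlen, hpos⟩, by simp [g, ← h1]⟩
        · refine ⟨Sum.inr ⟨(x-1) :: t, by simp only [List.sum_cons]; omega,
            by simpa using hlen, ?_⟩, ?_⟩
          · intro y hy
            rcases List.mem_cons.mp hy with rfl | hy
            · omega
            · exact hpos y hy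
          · simp only [g, Subtype.mk.injEq, List.cons.injEq]
            exact ⟨by omega, trivial⟩
  rw [pComp, pComp, pComp, ← Nat.card_sum, Nat.card_congr (Equiv.ofBijective g hbij)]

lemma pComp_eq_choose (a b : ℕ) : pComp (a+1) (b+1) = a.choose b := by
  induction a generalizing b with
  | zero =>
    rw [pComp_succ_succ]
    cases b with
    | zero => simp [pComp_zero_zero, pComp_zero_succ]
    | succ c => simp [pComp_zero_succ, Nat.choose_eq_zero_of_lt (Nat.zero_lt_succ c)]
  | succ a ih =>
    rw [pComp_succ_succ]
    cases b with
    | zero => simp [pComp_succ_zero, ih 0]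
    | succ c => rw [ih c, ih (c+1), Nat.choose_succ_succ]

def S (m k : ℕ) : Finset (Finset ℕ) :=
  ((Finset.Icc 1 m).powerset).filter (fun A => A.card = k ∧ ∀ i ∈ A, i + 1 ∉ A)

lemma mem_S {m k : ℕ} {A : Finset ℕ} :
    A ∈ S m k ↔ A ⊆ Finset.Icc 1 m ∧ A.card = k ∧ ∀ i ∈ A, i + 1 ∉ A := by
  simp [S, Finset.mem_filter, Finset.mem_powerset, and_assoc]

lemma S_zero_right (m : ℕ) : S m 0 = {∅} := by
  ext A
  simp only [mem_S, Finset.mem_singleton, Finset.card_eq_zero]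
  constructor
  · rintro ⟨-, rfl, -⟩; rfl
  · rintro rfl; simp

lemma S_rec (m k : ℕ) : (S (m+2) (k+1)).card = (S m k).card + (S (m+1) (k+1)).card := by
  classical
  rw [← Finset.card_filter_add_card_filter_not
    (p := fun A => (m+2) ∈ A) (s := S (m+2) (k+1))]
  congr 1
  · -- subsets containing m+2 correspond to S m k
    refine Finset.card_bij' (fun A _ => A.erase (m+2)) (fun B _ => insert (m+2) B)
      ?_ ?_ ?_ ?_
    · intro A hA
      simp only [Finset.mem_filter, mem_S] at hA
      obtain ⟨⟨hsub, hcard, hsp⟩, hmem⟩ := hA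
      rw [mem_S]
      refine ⟨?_, ?_, ?_⟩
      · intro x hx
        have hx' := Finset.mem_of_mem_erase hx
        have hxA : x ≠ m + 2 := Finset.ne_of_mem_erase hx
        have hb := Finset.mem_Icc.mp (hsub hx')
        have hxm1 : x ≠ m + 1 := by
          rintro rfl
          exact hsp (m+1) hx' hmem
        exact Finset.mem_Icc.mpr ⟨hb.1, by omega⟩
      · rw [Finset.card_erase_of_mem hmem, hcard]; omega
      · intro i hi
        intro hcon
        exact hsp i (Finset.mem_of_mem_erase hi)
          (Finset.mem_of_mem_erase hcon)
    · intro B hB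
      rw [mem_S] at hB
      obtain ⟨hsub, hcard, hsp⟩ := hB
      have hnot : (m+2) ∉ B := by
        intro hc
        have := (Finset.mem_Icc.mp (hsub hc)).2
        omega
      simp only [Finset.mem_filter, mem_S]
      refine ⟨⟨?_, ?_, ?_⟩, Finset.mem_insert_self _ _⟩
      · intro x hx
        rcases Finset.mem_insert.mp hx with rfl | hx
        · exact Finset.mem_Icc.mpr ⟨by omega, le_rfl⟩
        · have := Finset.mem_Icc.mp (hsub hx)
          exact Finset.mem_Icc.mpr ⟨this.1, by omega⟩
      · rw [Finset.card_insert_of_notMem hnot, hcard]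
      · intro i hi
        rcases Finset.mem_insert.mp hi with rfl | hi
        · intro hc
          rcases Finset.mem_insert.mp hc with h | h
          · omega
          · have := (Finset.mem_Icc.mp (hsub h)).2
            omega
        · intro hc
          rcases Finset.mem_insert.mp hc with h | h
          · have := (Finset.mem_Icc.mp (hsub hi)).2
            omega
          · exact hsp i hi h
    · intro A hA
      simp only [Finset.mem_filter] at hA
      exact Finset.insert_erase hA.2
    · intro B hB
      rw [mem_S] at hB
      have hnot : (m+2) ∉ B := by
        intro hc
        have := (Finset.mem_Icc.mp (hB.1 hc)).2
        omega
      exact Finset.erase_insert hnot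
  · -- subsets not containing m+2 are exactly S (m+1) (k+1)
    congr 1
    ext A
    simp only [Finset.mem_filter, mem_S]
    constructor
    · rintro ⟨⟨hsub, hcard, hsp⟩, hnot⟩
      refine ⟨?_, hcard, hsp⟩
      intro x hx
      have := Finset.mem_Icc.mp (hsub hx)
      have : x ≠ m + 2 := by rintro rfl; exact hnot hx
      have := Finset.mem_Icc.mp (hsub hx)
      exact Finset.mem_Icc.mpr ⟨this.1, by omega⟩
    · rintro ⟨hsub, hcard, hsp⟩
      refine ⟨⟨?_, hcard, hsp⟩, ?_⟩
      · intro x hx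
        have := Finset.mem_Icc.mp (hsub hx)
        exact Finset.mem_Icc.mpr ⟨this.1, by omega⟩
      · intro hc
        have := (Finset.mem_Icc.mp (hsub hc)).2
        omega

lemma S_card : ∀ m k : ℕ, (S m k).card = (m + 1 - k).choose k := by
  intro m
  induction m using Nat.strong_induction_on with
  | _ m ih =>
    match m with
    | 0 =>
      intro k
      cases k with
      | zero => simp [S_zero_right]
      | succ j =>
        have : S 0 (j+1) = ∅ := by
          ext A
          simp only [mem_S, Finset.notMem_empty, iff_false, not_and]
          intro hsub hcard
          exfalso
          have : A = ∅ := Finset.subset_empty.mp (by simpa using hsub)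
          rw [this] at hcard
          simp at hcard
        rw [this]
        simp [Nat.choose_eq_zero_of_lt (by omega : 1 - (j+1) < j + 1)]
    | 1 =>
      intro k
      cases k with
      | zero => simp [S_zero_right]
      | succ j =>
        have hIcc : Finset.Icc 1 1 = {1} := by rfl
        cases j with
        | zero =>
          have : S 1 1 = {{1}} := by
            ext A
            simp only [mem_S, hIcc, Finset.mem_singleton, Finset.card_eq_one,
              Finset.subset_singleton_iff]
            constructor
            · rintro ⟨(rfl | rfl), ⟨x, hx⟩, -⟩
              · exact absurd hx.symm (Finset.singleton_ne_empty x)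
              · rfl
            · rintro rfl
              refine ⟨Or.inr rfl, ⟨1, rfl⟩, ?_⟩
              intro i hi
              simp only [Finset.mem_singleton] at hi ⊢
              omega
          rw [this]
          simp
        | succ i =>
          have : S 1 (i+2) = ∅ := by
            ext A
            simp only [mem_S, Finset.notMem_empty, iff_false, not_and]
            intro hsub hcard
            exfalso
            rw [hIcc, Finset.subset_singleton_iff] at hsub
            rcases hsub with rfl | rfl
            · simp at hcard
            · simp at hcard
          rw [this]
          simp [Nat.choose_eq_zero_of_lt (by omega : 2 - (i+2) < i + 2)]
    | (m+2) =>
      intro k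
      cases k with
      | zero => simp [S_zero_right]
      | succ k =>
        rw [S_rec, ih m (by omega) k, ih (m+1) (by omega) (k+1)]
        rcases le_or_gt k (m+1) with h | h
        · have h1 : m + 2 + 1 - (k+1) = (m + 1 - k) + 1 := by omega
          have h2 : m + 1 + 1 - (k+1) = m + 1 - k := by omega
          rw [h1, h2, Nat.choose_succ_succ]
        · have h1 : m + 2 + 1 - (k+1) = 0 ∨ m + 2 + 1 - (k+1) < k + 1 := by omega
          have h2 : m + 1 - k = 0 := by omega
          have h3 : m + 1 + 1 - (k+1) = 0 := by omega
          rw [h2, h3, Nat.choose_eq_zero_of_lt (by omega),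
            Nat.choose_eq_zero_of_lt (by omega), Nat.choose_eq_zero_of_lt (by omega)]

/-- For `1 ≤ k < m`, the number of sparse subsets of `{1,...,m}` of cardinality `k`
(no two consecutive elements) equals `p(m-k,k-1) + 2p(m-k,k) + p(m-k,k+1)`. -/
theorem stmt12 (m k : ℕ) (h1 : 1 ≤ k) (h2 : k < m) :
    Nat.card {A : Finset ℕ //
        A ⊆ Finset.Icc 1 m ∧ A.card = k ∧ ∀ i ∈ A, i + 1 ∉ A} =
      pComp (m - k) (k - 1) + 2 * pComp (m - k) k + pComp (m - k) (k + 1) := by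
  classical
  have hA : Nat.card {A : Finset ℕ //
      A ⊆ Finset.Icc 1 m ∧ A.card = k ∧ ∀ i ∈ A, i + 1 ∉ A} = (S m k).card := by
    rw [← Nat.card_eq_finsetCard]
    exact Nat.card_congr (Equiv.subtypeEquivRight (fun A => mem_S.symm))
  rw [hA, S_card]
  obtain ⟨c, hc⟩ : ∃ c, m - k = c + 1 := ⟨m - k - 1, by omega⟩
  obtain ⟨j, hj⟩ : ∃ j, k = j + 1 := ⟨k - 1, by omega⟩
  have hm1 : m + 1 - k = c + 2 := by omega
  rw [hm1, hc, hj]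
  simp only [Nat.add_sub_cancel]
  cases j with
  | zero =>
    rw [pComp_succ_zero, pComp_eq_choose, pComp_eq_choose]
    simp [Nat.choose_one_right]
    omega
  | succ i =>
    rw [pComp_eq_choose, pComp_eq_choose, pComp_eq_choose]
    rw [Nat.choose_succ_succ (c+1) (i+1), Nat.choose_succ_succ c i,
      Nat.choose_succ_succ c (i+1)]
    ring
end

section
/- Fix k ≥ 1, n ≥ 0, and a vector (n₁,...,n_k) of positive integers with n₁+...+n_k = n+1. The number of patterns c ∈ D(n,k) (tuples c : {0,...,n} → [k] with c(i) ≠ c(i+1)) whose content satisfies |c⁻¹(j)| = n_j for each j ∈ [k] equals the number of perfect shuffles |PSh_k(n₁,...,n_k)|. -/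
section Aux

variable {k n : ℕ} {m : Fin k → ℕ}

/-- fiber of `c` at `j` as a finset. -/
def myFiber (c : Fin (n + 1) → Fin k) (j : Fin k) : Finset (Fin (n + 1)) :=
  Finset.univ.filter fun x => c x = j

/-- enumeration of the fibers. -/
noncomputable def myF (c : Fin (n + 1) → Fin k)
    (h2 : ∀ j, (myFiber c j).card = m j) : (Σ j : Fin k, Fin (m j)) → Fin (n + 1) :=
  fun p => (myFiber c p.1).orderEmbOfFin (h2 p.1) p.2

lemma myF_mem (c : Fin (n + 1) → Fin k) (h2 : ∀ j, (myFiber c j).card = m j)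
    (p : Σ j : Fin k, Fin (m j)) : c (myF c h2 p) = p.1 := by
  have h := Finset.orderEmbOfFin_mem (myFiber c p.1) (h2 p.1) p.2
  simp only [myFiber, Finset.mem_filter] at h
  exact h.2

lemma myF_bij (c : Fin (n + 1) → Fin k) (h2 : ∀ j, (myFiber c j).card = m j)
    (hsum : ∑ j, m j = n + 1) : Function.Bijective (myF c h2) := by
  have hinj : Function.Injective (myF c h2) := by
    rintro ⟨j, i⟩ ⟨j', i'⟩ h
    have hj : j = j' := by
      have ha := myF_mem c h2 ⟨j, i⟩
      have hb := myF_mem c h2 ⟨j', i'⟩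
      rw [h] at ha
      simp only at ha hb
      rw [ha] at hb
      exact hb
    subst hj
    have : i = i' := (Finset.orderEmbOfFin (myFiber c j) (h2 j)).injective h
    simp [this]
  have hcard : Fintype.card (Σ j : Fin k, Fin (m j)) = Fintype.card (Fin (n + 1)) := by
    simp [Fintype.card_sigma, hsum]
  exact (Fintype.bijective_iff_injective_and_card _).2 ⟨hinj, hcard⟩

/-- fiber of the pattern induced by a shuffle `α` is the image of block `j`. -/
lemma fiber_eq_image (α : (Σ j : Fin k, Fin (m j)) ≃ Fin (n + 1)) (j : Fin k) :
    myFiber (fun x => (α.symm x).1) j =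
      Finset.univ.image fun i : Fin (m j) => α ⟨j, i⟩ := by
  ext x
  simp only [myFiber, Finset.mem_filter, Finset.mem_univ, true_and, Finset.mem_image]
  constructor
  · intro hx
    subst hx
    exact ⟨(α.symm x).2, (congrArg α (Sigma.eta _)).trans (α.apply_symm_apply x)⟩
  · rintro ⟨i, rfl⟩
    rw [α.symm_apply_apply]

lemma fiber_card (α : (Σ j : Fin k, Fin (m j)) ≃ Fin (n + 1)) (j : Fin k) :
    (myFiber (fun x => (α.symm x).1) j).card = m j := by
  rw [fiber_eq_image]
  rw [Finset.card_image_of_injective _ (fun a b hab => by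
    have := α.injective hab
    simpa using this)]
  simp

end Aux

/-- The number of patterns `c : {0,...,n} → [k]` (no two consecutive values equal) with
content `|c⁻¹(j)| = m j` equals the number of perfect shuffles of blocks of sizes
`m 1, ..., m k`. -/
theorem stmt15 (k n : ℕ) (hk : 1 ≤ k) (m : Fin k → ℕ) (hm : ∀ j, 0 < m j)
    (hsum : ∑ j, m j = n + 1) :
    Nat.card {c : Fin (n + 1) → Fin k //
        (∀ i : Fin n, c i.castSucc ≠ c i.succ) ∧
        ∀ j, (Finset.univ.filter fun i => c i = j).card = m j} =
    Nat.card {α : (Σ j : Fin k, Fin (m j)) ≃ Fin (n + 1) //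
        (∀ j, StrictMono fun i : Fin (m j) => α ⟨j, i⟩) ∧
        (∀ (j : Fin k) (i : ℕ) (h : i + 1 < m j),
          ((α ⟨j, ⟨i, by omega⟩⟩ : Fin (n + 1)) : ℕ) + 1 <
            ((α ⟨j, ⟨i + 1, h⟩⟩ : Fin (n + 1)) : ℕ))} := by
  refine Nat.card_congr ?_
  refine
    { toFun := fun P =>
        ⟨Equiv.ofBijective (myF P.1 P.2.2) (myF_bij P.1 P.2.2 hsum), ?_, ?_⟩
      invFun := fun S =>
        ⟨fun x => ((S.1).symm x).1, ?_, ?_⟩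
      left_inv := ?_
      right_inv := ?_ }
  · -- strict mono of forward map
    intro j a b hab
    exact (Finset.orderEmbOfFin (myFiber P.1 j) (P.2.2 j)).strictMono hab
  · -- gap condition of forward map
    obtain ⟨c, h1, h2⟩ := P
    intro j i h
    simp only [Equiv.ofBijective_apply]
    set p : Fin (n + 1) := myF c h2 ⟨j, ⟨i, by omega⟩⟩ with hp
    set q : Fin (n + 1) := myF c h2 ⟨j, ⟨i + 1, h⟩⟩ with hq
    have hpq : p < q :=
      (Finset.orderEmbOfFin (myFiber c j) (h2 j)).strictMono
        (show (⟨i, by omega⟩ : Fin (m j)) < ⟨i + 1, h⟩ by simp [Fin.lt_def])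
    by_contra hcon
    have heq : (p : ℕ) + 1 = (q : ℕ) := by
      have := (Fin.lt_def).1 hpq; omega
    have hpn : (p : ℕ) < n := by omega
    have hc1 : c p = j := myF_mem c h2 ⟨j, ⟨i, by omega⟩⟩
    have hc2 : c q = j := myF_mem c h2 ⟨j, ⟨i + 1, h⟩⟩
    refine h1 ⟨(p : ℕ), hpn⟩ ?_
    have e1 : (⟨(p : ℕ), hpn⟩ : Fin n).castSucc = p := by ext; simp
    have e2 : (⟨(p : ℕ), hpn⟩ : Fin n).succ = q := by ext; simp [heq]
    rw [e1, e2, hc1, hc2]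
  · -- no two consecutive equal values for inverse map
    obtain ⟨α, hmono, hgap⟩ := S
    intro i heq
    simp only at heq
    set j := (α.symm i.succ).1 with hj
    have hmem1 : (i.castSucc : Fin (n + 1)) ∈ myFiber (fun x => (α.symm x).1) j := by
      simp [myFiber, ← heq]
    have hmem2 : (i.succ : Fin (n + 1)) ∈ myFiber (fun x => (α.symm x).1) j := by
      simp [myFiber]
      exact hj.symm
    rw [fiber_eq_image, Finset.mem_image] at hmem1 hmem2
    obtain ⟨a, -, ha⟩ := hmem1
    obtain ⟨b, -, hb⟩ := hmem2
    -- a < b since α⟨j,a⟩ = i.castSucc < i.succ = α⟨j,b⟩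
    have hab : a < b := by
      have : α ⟨j, a⟩ < α ⟨j, b⟩ := by
        rw [ha, hb]
        simp [Fin.lt_def]
      exact (hmono j).lt_iff_lt.1 this
    have hb1 : (a : ℕ) + 1 < m j := by
      have := hab
      rw [Fin.lt_def] at this
      omega
    have hgap' := hgap j a hb1
    have hle : α ⟨j, (⟨(a : ℕ) + 1, hb1⟩ : Fin (m j))⟩ ≤ α ⟨j, b⟩ := by
      refine (hmono j).le_iff_le.2 ?_
      rw [Fin.le_def]
      simp only
      rw [Fin.lt_def] at hab
      omega
    have hav : (⟨(a : ℕ), by omega⟩ : Fin (m j)) = a := by ext; rfl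
    rw [hav] at hgap'
    rw [ha] at hgap'
    rw [hb] at hle
    have hcs : ((i.castSucc : Fin (n + 1)) : ℕ) = (i : ℕ) := rfl
    have hsc : ((i.succ : Fin (n + 1)) : ℕ) = (i : ℕ) + 1 := rfl
    rw [hcs] at hgap'
    have := Fin.le_def.1 hle
    rw [hsc] at this
    omega
  · -- content condition for inverse map
    intro j
    exact fiber_card S.1 j
  · -- left inverse
    rintro ⟨c, h1, h2⟩
    apply Subtype.ext
    funext x
    simp only
    set E := Equiv.ofBijective (myF c h2) (myF_bij c h2 hsum) with hE
    have : c x = c (E (E.symm x)) := by rw [E.apply_symm_apply]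
    rw [this]
    exact (myF_mem c h2 (E.symm x)).symm
  · -- right inverse
    rintro ⟨α, hmono, hgap⟩
    apply Subtype.ext
    simp only
    apply Equiv.ext
    rintro ⟨j, i⟩
    simp only [Equiv.ofBijective_apply]
    have hu : (fun i : Fin (m j) => α ⟨j, i⟩) =
        ⇑((myFiber (fun x => (α.symm x).1) j).orderEmbOfFin (fiber_card α j)) := by
      refine Finset.orderEmbOfFin_unique (fiber_card α j) ?_ (hmono j)
      intro x
      simp [myFiber]
    show (myFiber (fun x => (α.symm x).1) j).orderEmbOfFin _ i = α ⟨j, i⟩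
    rw [← hu]
end

section
/- For the directed manifold (ℝ^k, ∂/∂x₁,...,∂/∂x_k) and a pattern c ∈ D(n,k), the moduli space of directed paths from 0 to (x₁,...,x_k) ∈ ℝ_{>0}^k with pattern c is nonempty only if the total time is t = x₁+...+x_k, and when nonempty it is a product over j in the support of c of simplices, with volume ∏_{j ∈ s(c)} x_j^{|c|_j − 1} / (|c|_j − 1)!, where |c|_j = |c⁻¹(j)| and s(c) = { j : |c|_j > 0 }. -/
open MeasureTheory

lemma simplex_meas (d : ℕ) (a : ℝ) :
    MeasurableSet {w : Fin d → ℝ | (∀ i, 0 ≤ w i) ∧ ∑ i, w i ≤ a} := by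
  have : {w : Fin d → ℝ | (∀ i, 0 ≤ w i) ∧ ∑ i, w i ≤ a}
      = (⋂ i, {w : Fin d → ℝ | 0 ≤ w i}) ∩ {w : Fin d → ℝ | ∑ i, w i ≤ a} := by
    ext w; simp [Set.mem_iInter]
  rw [this]
  exact (MeasurableSet.iInter fun i =>
      measurableSet_le measurable_const (measurable_pi_apply i)).inter
    (measurableSet_le (Finset.measurable_sum _ fun i _ => measurable_pi_apply i)
      measurable_const)

lemma simplex_vol : ∀ (d : ℕ) (a : ℝ), 0 ≤ a →
    volume {w : Fin d → ℝ | (∀ i, 0 ≤ w i) ∧ ∑ i, w i ≤ a}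
      = ENNReal.ofReal (a ^ d / d.factorial) := by
  intro d
  induction d with
  | zero =>
    intro a ha
    have h1 : {w : Fin 0 → ℝ | (∀ i, 0 ≤ w i) ∧ ∑ i, w i ≤ a} = Set.univ := by
      ext w; simp [ha]
    rw [h1]
    rw [show (volume : Measure (Fin 0 → ℝ)) = Measure.pi (fun _ => volume) from rfl,
      Measure.pi_univ]
    simp
  | succ d ih =>
    intro a ha
    set T : Set (ℝ × (Fin d → ℝ)) :=
      {p | 0 ≤ p.1 ∧ (∀ i, 0 ≤ p.2 i) ∧ p.1 + ∑ i, p.2 i ≤ a} with hT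
    have hTm : MeasurableSet T := by
      have h2 : T = {p : ℝ × (Fin d → ℝ) | 0 ≤ p.1} ∩
          ((⋂ i, {p : ℝ × (Fin d → ℝ) | 0 ≤ p.2 i}) ∩
            {p : ℝ × (Fin d → ℝ) | p.1 + ∑ i, p.2 i ≤ a}) := by
        ext p; simp [hT, Set.mem_iInter]
      rw [h2]
      refine (measurableSet_le measurable_const measurable_fst).inter
        ((MeasurableSet.iInter fun i => measurableSet_le measurable_const
          ((measurable_pi_apply i).comp measurable_snd)).inter
        (measurableSet_le (measurable_fst.add (Finset.measurable_sum _ fun i _ =>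
          (measurable_pi_apply i).comp measurable_snd)) measurable_const))
    have he : ∀ w : Fin (d+1) → ℝ,
        (MeasurableEquiv.piFinSuccAbove (fun _ => ℝ) 0) w = (w 0, fun j => w j.succ) := by
      intro w
      simp [MeasurableEquiv.piFinSuccAbove]
      rfl
    have hpre : {w : Fin (d+1) → ℝ | (∀ i, 0 ≤ w i) ∧ ∑ i, w i ≤ a}
        = (MeasurableEquiv.piFinSuccAbove (fun _ => ℝ) 0) ⁻¹' T := by
      ext w
      rw [Set.mem_preimage, he w]
      simp only [hT, Set.mem_setOf_eq]
      constructor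
      · rintro ⟨h1, h2⟩
        refine ⟨h1 0, fun i => h1 _, ?_⟩
        rw [Fin.sum_univ_succ] at h2
        exact h2
      · rintro ⟨h0, h1, h2⟩
        refine ⟨fun i => ?_, ?_⟩
        · induction i using Fin.cases with
          | zero => exact h0
          | succ i => exact h1 i
        · rw [Fin.sum_univ_succ]
          exact h2
    have hvol : volume {w : Fin (d+1) → ℝ | (∀ i, 0 ≤ w i) ∧ ∑ i, w i ≤ a} = volume T := by
      rw [hpre]
      exact (volume_preserving_piFinSuccAbove (fun _ : Fin (d+1) => ℝ) 0).measure_preimage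
        hTm.nullMeasurableSet
    rw [hvol]
    have hprod : (volume : Measure (ℝ × (Fin d → ℝ))) = (volume : Measure ℝ).prod volume := rfl
    rw [hprod, Measure.prod_apply hTm]
    have hsec : ∀ x : ℝ, volume (Prod.mk x ⁻¹' T)
        = Set.indicator (Set.Icc 0 a)
            (fun x => ENNReal.ofReal ((a - x) ^ d / d.factorial)) x := by
      intro x
      by_cases hx : x ∈ Set.Icc 0 a
      · rw [Set.indicator_of_mem hx]
        have h3 : Prod.mk x ⁻¹' T = {w : Fin d → ℝ | (∀ i, 0 ≤ w i) ∧ ∑ i, w i ≤ a - x} := by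
          ext w
          simp only [Set.mem_preimage, hT, Set.mem_setOf_eq]
          constructor
          · rintro ⟨_, h1, h2⟩; exact ⟨h1, by linarith⟩
          · rintro ⟨h1, h2⟩; exact ⟨hx.1, h1, by linarith⟩
        rw [h3, ih (a - x) (by linarith [hx.2])]
      · rw [Set.indicator_of_notMem hx]
        have h3 : Prod.mk x ⁻¹' T = ∅ := by
          ext w
          simp only [Set.mem_preimage, hT, Set.mem_setOf_eq, Set.mem_empty_iff_false,
            iff_false]
          rintro ⟨h0, h1, h2⟩
          apply hx
          refine ⟨h0, ?_⟩
          have : 0 ≤ ∑ i, w i := Finset.sum_nonneg fun i _ => h1 i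
          linarith
        rw [h3]; simp
    calc ∫⁻ x, volume (Prod.mk x ⁻¹' T)
        = ∫⁻ x, Set.indicator (Set.Icc 0 a)
            (fun x => ENNReal.ofReal ((a - x) ^ d / d.factorial)) x :=
          lintegral_congr hsec
      _ = ∫⁻ x in Set.Icc 0 a, ENNReal.ofReal ((a - x) ^ d / d.factorial) := by
          rw [lintegral_indicator measurableSet_Icc]
      _ = ENNReal.ofReal (∫ x in Set.Icc 0 a, (a - x) ^ d / d.factorial) := by
          rw [← ofReal_integral_eq_lintegral_ofReal]
          · exact Integrable.div_const (Continuous.integrableOn_Icc (f := fun x : ℝ => (a - x) ^ d) (by continuity)) _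
          · filter_upwards [ae_restrict_mem measurableSet_Icc] with y hy
            have : 0 ≤ a - y := by linarith [hy.2]
            positivity
      _ = ENNReal.ofReal (a ^ (d+1) / (d+1).factorial) := by
          congr 1
          rw [MeasureTheory.integral_Icc_eq_integral_Ioc, ← intervalIntegral.integral_of_le ha]
          rw [intervalIntegral.integral_div]
          have h4 : ∫ x in (0:ℝ)..a, (a - x) ^ d = ∫ x in (0:ℝ)..a, x ^ d := by
            have := intervalIntegral.integral_comp_sub_left (a := 0) (b := a)
              (fun u => u ^ d) a
            simpa using this
          rw [h4, integral_pow, Nat.factorial_succ]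
          push_cast
          have h5 : (d.factorial : ℝ) ≠ 0 := Nat.cast_ne_zero.2 d.factorial_ne_zero
          field_simp
          simp

/-- For `(ℝᵏ, ∂/∂x₁,...,∂/∂x_k)` and a pattern `c`, the moduli space of directed paths
from `0` to `(x₁,...,x_k) ∈ ℝ_{>0}^k` with pattern `c` is nonempty only if
`t = x₁+...+x_k`; when `t = Σ xⱼ`, grouping time coordinates by direction gives a
bijection onto a product of simplices `Δ_{|c|ⱼ-1}(xⱼ)`, and each such simplex has
volume `xⱼ^{|c|ⱼ-1}/(|c|ⱼ-1)!` (computed, as in the paper, as the Lebesgue volume of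
its coordinate projection). -/
theorem stmt16 (k n : ℕ) (c : Fin (n + 1) → Fin k)
    (hc : ∀ i : Fin n, c i.castSucc ≠ c i.succ)
    (x : Fin k → ℝ) (hx : ∀ j, 0 < x j) (t : ℝ) :
    let Γ : Set (Fin (n + 1) → ℝ) :=
      {s | (∀ m, 0 ≤ s m) ∧ (∑ m, s m = t) ∧
        ∀ j, ∑ m ∈ Finset.univ.filter (fun m => c m = j), s m = x j}
    (Γ.Nonempty → t = ∑ j, x j) ∧
    (t = ∑ j, x j →
      Set.BijOn
        (fun (s : Fin (n + 1) → ℝ) (j : Fin k) (m : {m : Fin (n + 1) // c m = j}) => s m.1)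
        Γ
        {u : ∀ j : Fin k, {m : Fin (n + 1) // c m = j} → ℝ |
          ∀ j, (∀ m, 0 ≤ u j m) ∧ ∑ m, u j m = x j}) ∧
    (∀ j ∈ Finset.univ.image c,
      volume {w : Fin ((Finset.univ.filter fun m => c m = j).card - 1) → ℝ |
          (∀ i, 0 ≤ w i) ∧ ∑ i, w i ≤ x j}
        = ENNReal.ofReal
            (x j ^ ((Finset.univ.filter fun m => c m = j).card - 1) /
              (((Finset.univ.filter fun m => c m = j).card - 1).factorial : ℝ))) := by
  intro Γ
  have key : ∀ (s : Fin (n+1) → ℝ) (j : Fin k),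
      ∑ m ∈ Finset.univ.filter (fun m => c m = j), s m
        = ∑ m : {m : Fin (n+1) // c m = j}, s m.1 := by
    intro s j
    exact Finset.sum_subtype _ (fun m => by simp) _
  have fib : ∀ s : Fin (n+1) → ℝ,
      ∑ j, ∑ m ∈ Finset.univ.filter (fun m => c m = j), s m = ∑ m, s m :=
    fun s => Finset.sum_fiberwise _ _ _
  refine ⟨?_, ?_, ?_⟩
  · rintro ⟨s, h0, h1, h2⟩
    rw [← h1, ← fib s]
    exact Finset.sum_congr rfl fun j _ => h2 j
  · intro ht
    refine ⟨?_, ?_, ?_⟩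
    · rintro s ⟨h0, h1, h2⟩ j
      exact ⟨fun m => h0 m.1, by rw [← key s j]; exact h2 j⟩
    · rintro s ⟨h0, h1, h2⟩ s' ⟨h0', h1', h2'⟩ h
      funext m
      exact congrFun (congrFun h (c m)) ⟨m, rfl⟩
    · rintro u hu
      refine ⟨fun m => u (c m) ⟨m, rfl⟩, ⟨fun m => (hu (c m)).1 _, ?_, ?_⟩, ?_⟩
      · have h2 : ∀ j, ∑ m ∈ Finset.univ.filter (fun m => c m = j),
            u (c m) ⟨m, rfl⟩ = x j := by
          intro j
          rw [key]
          rw [← (hu j).2]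
          apply Finset.sum_congr rfl
          rintro ⟨m, hm⟩ _
          subst hm
          rfl
        rw [← fib, ht]
        exact Finset.sum_congr rfl fun j _ => h2 j
      · intro j
        rw [key, ← (hu j).2]
        apply Finset.sum_congr rfl
        rintro ⟨m, hm⟩ _
        subst hm
        rfl
      · funext j m
        obtain ⟨m, hm⟩ := m
        subst hm
        rfl
  · intro j hj
    exact simplex_vol _ _ (hx j).le
end
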